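/- Given a sequence of complex numbers $\lambda_n > 0$ and inner products satisfying $\langle u_k, u_m\rangle = \langle u_k,u_k\rangle\delta_{km}$ and $\langle u_k,\bar u_m\rangle = \langle u_k,\bar u_{-k}\rangle\delta_{k,-m}$, the coefficients $\alpha_{nk} = \big[\frac{\lambda_{-n} + \langle u_n,u_n\rangle}{\lambda_n(\lambda_n+\lambda_{-n})}\big]^{1/2}\delta_{nk}$ and $\beta_{nk} = -\big[\frac{\langle u_n,u_n\rangle - \lambda_n}{\lambda_n(\lambda_n+\lambda_{-n})}\big]^{1/2} e^{-i\arg\langle u_n,\bar u_{-n}\rangle}\delta_{n,-k}$, with $2\lambda_n = \langle u_n,u_n\rangle - \langle u_{-n},u_{-n}\rangle + \big[(\langle u_n,u_n\rangle + \langle u_{-n},u_{-n}\rangle)^2 - 4|\langle u_n,\bar u_{-n}\rangle|^2\big]^{1/2}$, satisfy the eigenvalue equations $\alpha_{nk} = \frac{1}{\lambda_n}\sum_m \alpha_{nm}\langle u_k,u_m\rangle + \beta_{nm}\langle u_k,\bar u_m\rangle$ and $\beta_{nk} = \frac{-1}{\lambda_n}\sum_m \alpha_{nm}\langle\bar u_k,u_m\rangle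 + \beta_{nm}\langle\bar u_k,\bar u_m\rangle$. -/

import Mathlib

noncomputable section

private lemma sj_aux_sqrt (x y nc D : ℝ) (hx : 0 ≤ x) (hnc : 0 ≤ nc) (hD : 0 < D)
    (h : x * y = nc ^ 2) : x * Real.sqrt (y / D) = nc * Real.sqrt (x / D) := by
  have h1 : x * Real.sqrt (y / D) = Real.sqrt (x ^ 2 * (y / D)) := by
    rw [Real.sqrt_mul (sq_nonneg x), Real.sqrt_sq hx]
  have h2 : nc * Real.sqrt (x / D) = Real.sqrt (nc ^ 2 * (x / D)) := by
    rw [Real.sqrt_mul (sq_nonneg nc), Real.sqrt_sq hnc]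
  rw [h1, h2]
  congr 1
  field_simp
  linear_combination x * h

private lemma sj_aux_exp (z : ℂ) :
    z * Complex.exp (-(z.arg : ℂ) * Complex.I) = (‖z‖ : ℂ) := by
  nth_rewrite 1 [← Complex.norm_mul_exp_arg_mul_I z]
  rw [mul_assoc, ← Complex.exp_add]
  ring_nf
  rw [Complex.exp_zero, mul_one]

private lemma sj_aux_conj (z : ℂ) :
    (starRingEnd ℂ) z = (‖z‖ : ℂ) * Complex.exp (-(z.arg : ℂ) * Complex.I) := by
  nth_rewrite 1 [← Complex.norm_mul_exp_arg_mul_I z]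
  rw [map_mul, ← Complex.exp_conj, map_mul, Complex.conj_ofReal, Complex.conj_I,
    Complex.conj_ofReal]
  ring_nf

/-- Direct verification that the S-J coefficients `α, β` (built from the eigenvalues `λₙ`
of the Pauli–Jordan operator under the plane-wave assumptions
`⟨u_k,u_m⟩ = ⟨u_k,u_k⟩δ_{km}`, `⟨u_k,ū_m⟩ = ⟨u_k,ū_{-k}⟩δ_{k,-m}`)
solve the eigenfunction equations
`αₙₖ = (1/λₙ) ∑ₘ αₙₘ⟨u_k,u_m⟩ + βₙₘ⟨u_k,ū_m⟩` and
`βₙₖ = (-1/λₙ) ∑ₘ αₙₘ⟨ū_k,u_m⟩ + βₙₘ⟨ū_k,ū_m⟩`. -/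
theorem sj_coefficients_solve_eigen_equations
    {ι : Type*} [Fintype ι] [DecidableEq ι]
    (neg : ι → ι) (hneg : ∀ n, neg (neg n) = n)
    (a lam : ι → ℝ) (c : ι → ℂ)
    (ha : ∀ n, 0 < a n)
    (hc : ∀ n, c (neg n) = c n)
    (hlam_pos : ∀ n, 0 < lam n)
    (hlam_le : ∀ n, lam n ≤ a n)
    (hdisc : ∀ n, 4 * ‖c n‖ ^ 2 ≤ (a n + a (neg n)) ^ 2)
    (hlam : ∀ n, 2 * lam n = a n - a (neg n) +
      Real.sqrt ((a n + a (neg n)) ^ 2 - 4 * ‖c n‖ ^ 2))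
    (α β : ι → ι → ℂ)
    (hα : ∀ n k, α n k =
      ((Real.sqrt ((lam (neg n) + a n) / (lam n * (lam n + lam (neg n)))) : ℝ) : ℂ)
        * (if n = k then 1 else 0))
    (hβ : ∀ n k, β n k =
      -(((Real.sqrt ((a n - lam n) / (lam n * (lam n + lam (neg n)))) : ℝ) : ℂ)
        * Complex.exp (-((c n).arg : ℂ) * Complex.I))
        * (if k = neg n then 1 else 0))
    -- the inner products ⟨u_k,u_m⟩, ⟨u_k,ū_m⟩, ⟨ū_k,u_m⟩, ⟨ū_k,ū_m⟩
    (A B B' A' : ι → ι → ℂ)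
    (hA : ∀ k m, A k m = if k = m then ((a k : ℝ) : ℂ) else 0)
    (hB : ∀ k m, B k m = if m = neg k then c k else 0)
    (hB' : ∀ k m, B' k m = if k = neg m then (starRingEnd ℂ) (c m) else 0)
    (hA' : ∀ k m, A' k m = if k = m then ((a k : ℝ) : ℂ) else 0) :
    (∀ n k, α n k = (1 / ((lam n : ℝ) : ℂ)) * ∑ m, (α n m * A k m + β n m * B k m)) ∧
    (∀ n k, β n k = (-1 / ((lam n : ℝ) : ℂ)) * ∑ m, (α n m * B' k m + β n m * A' k m)) := by
  -- the two eigenvalues sum to the square-root discriminant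
  have hsum1 : ∀ n, lam n + lam (neg n) =
      Real.sqrt ((a n + a (neg n)) ^ 2 - 4 * ‖c n‖ ^ 2) := by
    intro n
    have h1 := hlam n
    have h2 := hlam (neg n)
    rw [hneg n, hc n, show (a (neg n) + a n) ^ 2 = (a n + a (neg n)) ^ 2 by ring] at h2
    linarith
  have hR : ∀ n, (lam n + lam (neg n)) ^ 2 = (a n + a (neg n)) ^ 2 - 4 * ‖c n‖ ^ 2 := by
    intro n
    rw [hsum1 n, Real.sq_sqrt (by linarith [hdisc n])]
  have hlamneg : ∀ n, lam (neg n) = lam n - a n + a (neg n) := by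
    intro n
    have h1 := hlam n
    have h2 := hsum1 n
    linarith
  -- the key quadratic identity
  have key : ∀ n, (a n - lam n) * (lam (neg n) + a n) = ‖c n‖ ^ 2 := by
    intro n
    have h2 := hR n
    rw [hlamneg n] at h2 ⊢
    linear_combination (-1/4) * h2
  have hDpos : ∀ n, 0 < lam n * (lam n + lam (neg n)) := fun n =>
    mul_pos (hlam_pos n) (by linarith [hlam_pos n, hlam_pos (neg n)])
  have scalar1 : ∀ n, (a n - lam n) *
      Real.sqrt ((lam (neg n) + a n) / (lam n * (lam n + lam (neg n)))) =
      ‖c n‖ * Real.sqrt ((a n - lam n) / (lam n * (lam n + lam (neg n)))) := fun n =>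
    sj_aux_sqrt _ _ _ _ (by linarith [hlam_le n]) (norm_nonneg _) (hDpos n) (key n)
  have scalar2 : ∀ n, (lam n + a (neg n)) *
      Real.sqrt ((a n - lam n) / (lam n * (lam n + lam (neg n)))) =
      ‖c n‖ * Real.sqrt ((lam (neg n) + a n) / (lam n * (lam n + lam (neg n)))) := by
    intro n
    have h := sj_aux_sqrt (lam (neg n) + a n) (a n - lam n) ‖c n‖
      (lam n * (lam n + lam (neg n)))
      (by linarith [hlam_pos (neg n), ha n]) (norm_nonneg _) (hDpos n)
      (by linear_combination key n)
    rw [show lam n + a (neg n) = lam (neg n) + a n from by linarith [hlamneg n]]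
    exact h
  have hneg_inj : ∀ {n k : ι}, neg n = neg k ↔ n = k := by
    intro n k
    constructor
    · intro h
      have := congrArg neg h
      rwa [hneg, hneg] at this
    · intro h; rw [h]
  have hlamne : ∀ n, ((lam n : ℝ) : ℂ) ≠ 0 := fun n => by
    exact_mod_cast (hlam_pos n).ne'
  constructor
  · intro n k
    have hs : ∑ m, (α n m * A k m + β n m * B k m)
        = α n n * A k n + β n (neg n) * B k (neg n) := by
      rw [Finset.sum_add_distrib]
      congr 1
      · exact Fintype.sum_eq_single n (fun m hm => by simp [hα, Ne.symm hm])
      · exact Fintype.sum_eq_single (neg n) (fun m hm => by simp [hβ, hm])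
    rw [hs, hA, hB]
    by_cases hk : k = n
    · subst hk
      rw [if_pos rfl, if_pos rfl, hα k k, hβ k (neg k), if_pos rfl, if_pos rfl]
      have S1 : (((a k : ℝ) : ℂ) - ((lam k : ℝ) : ℂ)) *
          ((Real.sqrt ((lam (neg k) + a k) / (lam k * (lam k + lam (neg k)))) : ℝ) : ℂ) =
          ((‖c k‖ : ℝ) : ℂ) *
          ((Real.sqrt ((a k - lam k) / (lam k * (lam k + lam (neg k)))) : ℝ) : ℂ) := by
        exact_mod_cast scalar1 k
      have hE := sj_aux_exp (c k)
      have hinv : ((lam k : ℝ) : ℂ) * ((lam k : ℝ) : ℂ)⁻¹ = 1 := mul_inv_cancel₀ (hlamne k)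
      linear_combination
        (-((Real.sqrt ((lam (neg k) + a k) / (lam k * (lam k + lam (neg k)))) : ℝ) : ℂ)) * hinv + (-(1 / ((lam k : ℝ) : ℂ))) * S1 +
        (((Real.sqrt ((a k - lam k) / (lam k * (lam k + lam (neg k)))) : ℝ) : ℂ)
          / ((lam k : ℝ) : ℂ)) * hE
    · simp [hα, hβ, hk, Ne.symm hk, hneg_inj]
  · intro n k
    have hs : ∑ m, (α n m * B' k m + β n m * A' k m)
        = α n n * B' k n + β n (neg n) * A' k (neg n) := by
      rw [Finset.sum_add_distrib]
      congr 1
      · exact Fintype.sum_eq_single n (fun m hm => by simp [hα, Ne.symm hm])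
      · exact Fintype.sum_eq_single (neg n) (fun m hm => by simp [hβ, hm])
    rw [hs, hB', hA']
    by_cases hk : k = neg n
    · subst hk
      rw [if_pos rfl, if_pos rfl, hα n n, hβ n (neg n), if_pos rfl, if_pos rfl]
      have S2 : (((lam n : ℝ) : ℂ) + ((a (neg n) : ℝ) : ℂ)) *
          ((Real.sqrt ((a n - lam n) / (lam n * (lam n + lam (neg n)))) : ℝ) : ℂ) =
          ((‖c n‖ : ℝ) : ℂ) *
          ((Real.sqrt ((lam (neg n) + a n) / (lam n * (lam n + lam (neg n)))) : ℝ) : ℂ) := by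
        exact_mod_cast scalar2 n
      have hCJ := sj_aux_conj (c n)
      have hinv : ((lam n : ℝ) : ℂ) * ((lam n : ℝ) : ℂ)⁻¹ = 1 := mul_inv_cancel₀ (hlamne n)
      linear_combination
        (((Real.sqrt ((a n - lam n) / (lam n * (lam n + lam (neg n)))) : ℝ) : ℂ)
          * Complex.exp (-((c n).arg : ℂ) * Complex.I)) * hinv +
        (((Real.sqrt ((lam (neg n) + a n) / (lam n * (lam n + lam (neg n)))) : ℝ) : ℂ)
          / ((lam n : ℝ) : ℂ)) * hCJ -
        (Complex.exp (-((c n).arg : ℂ) * Complex.I) / ((lam n : ℝ) : ℂ)) * S2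
    · simp [hα, hβ, hk, hneg_inj]
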